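/- Let L = Σ_{k=1}^d λ_k Π_k be a Hermitian matrix with distinct eigenvalues and orthogonal spectral projections resolving the identity, H Hermitian, and suppose the graph of the Laplacian Δ_{k,k'} = tr(Π_k D_H(Π_{k'})) is connected. Fix ℓ and let α_s (s ≠ ℓ) be the solutions of Δα_s = −β_s with α_{s,ℓ} = 0, α_{s,k} > 0 for k ≠ ℓ, where β_{s,k} > 0 for k ≠ ℓ and β_{s,ℓ} = −Σ_{k≠ℓ}β_{s,k}. Then there exist ε_f > 0 and p̄ ∈ (1/2, 1) such that for every density matrix ρ with max_{j≠ℓ} tr(ρΠ_j) ≥ p̄, one has f_α(ρ) ≤ −ε_f · V_α(ρ), where f_α(ρ) = Σ_{s≠ℓ} (Σ_k α_{s,k} tr(Π_k D_H(ρ)))/√(Σ_k α_{s,k} p_k(ρ)) and V_α(ρ) = Σ_{s≠ℓ} √(Σ_k α_{s,k} p_k(ρ)). -/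

import Mathlib

open Matrix Finset ComplexOrder

attribute [local instance] Matrix.normedAddCommGroup

/-- The dissipation superoperator `D_A(ρ) = AρA† − ½(A†Aρ + ρA†A)`. -/
noncomputable def Dsup {n : ℕ} (A ρ : Matrix (Fin n) (Fin n) ℂ) : Matrix (Fin n) (Fin n) ℂ :=
  A * ρ * Aᴴ - (1 / 2 : ℂ) • (Aᴴ * A * ρ + ρ * Aᴴ * A)

lemma Dsup_trace_symm {n : ℕ} {H : Matrix (Fin n) (Fin n) ℂ} (hH : Hᴴ = H)
    (P Q : Matrix (Fin n) (Fin n) ℂ) :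
    (Q * Dsup H P).trace = (P * Dsup H Q).trace := by
  have key : ∀ A B : Matrix (Fin n) (Fin n) ℂ,
      (A * (H * B * H)).trace = (B * (H * A * H)).trace := by
    intro A B
    rw [show A * (H * B * H) = (A * H) * (B * H) by simp [mul_assoc], trace_mul_comm,
      show (B * H) * (A * H) = B * (H * A * H) by simp [mul_assoc]]
  have h2 : (Q * (Hᴴ * H * P)).trace = (P * (Q * Hᴴ * H)).trace := by
    rw [show Q * (Hᴴ * H * P) = (Q * Hᴴ * H) * P by simp [mul_assoc], trace_mul_comm]
  have h3 : (Q * (P * Hᴴ * H)).trace = (P * (Hᴴ * H * Q)).trace := by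
    rw [trace_mul_comm, show (P * Hᴴ * H) * Q = P * (Hᴴ * H * Q) by simp [mul_assoc]]
  simp only [Dsup, hH, mul_sub, mul_add, mul_smul_comm, trace_sub, trace_smul, trace_add]
  rw [key Q P, hH] at *
  rw [h2, h3]
  simp only [smul_eq_mul]
  ring

lemma trace_re_nonneg' {n : ℕ} {M : Matrix (Fin n) (Fin n) ℂ} (hM : M.PosSemidef) :
    0 ≤ M.trace.re := by
  have : M.trace.re = ∑ i, (M i i).re := by
    simp [Matrix.trace, Matrix.diag, Complex.re_sum]
  rw [this]
  refine Finset.sum_nonneg fun i _ => ?_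
  have := hM.re_dotProduct_nonneg (Pi.single i 1)
  simpa [dotProduct, Matrix.mulVec, Pi.single_apply, Finset.sum_ite_eq] using this

lemma tr_sq_le_one {m : ℕ} {ρ : Matrix (Fin m) (Fin m) ℂ} (hρ : ρ.PosSemidef)
    (h1 : ρ.trace = 1) : ((ρ * ρ).trace).re ≤ 1 := by
  have hH := hρ.1
  have hs := hH.spectral_theorem
  set U : Matrix (Fin m) (Fin m) ℂ := (hH.eigenvectorUnitary : Matrix (Fin m) (Fin m) ℂ) with hUdef
  set D : Matrix (Fin m) (Fin m) ℂ := diagonal (RCLike.ofReal ∘ hH.eigenvalues) with hDdef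
  have hU : star U * U = 1 := Unitary.coe_star_mul_self hH.eigenvectorUnitary
  have htr : ρ.trace = ∑ i, (hH.eigenvalues i : ℂ) := by
    conv_lhs => rw [hs, Unitary.conjStarAlgAut_apply, ← hUdef]
    rw [trace_mul_comm, ← mul_assoc, hU, one_mul, hDdef, trace_diagonal]
    simp
  have hsum1 : ∑ i, hH.eigenvalues i = 1 := by
    have : ((∑ i, hH.eigenvalues i : ℝ) : ℂ) = 1 := by
      push_cast
      rw [← htr, h1]
    exact_mod_cast this
  have hmid : (U * D * star U) * (U * D * star U) = U * (D * D) * star U := by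
    simp only [mul_assoc]
    rw [← mul_assoc (star U) U, hU, one_mul]
  have hsq : (ρ * ρ).trace = ∑ i, ((hH.eigenvalues i : ℂ)) ^ 2 := by
    conv_lhs => rw [hs, Unitary.conjStarAlgAut_apply, ← hUdef]
    rw [hmid, trace_mul_comm, ← mul_assoc, hU, one_mul, hDdef, diagonal_mul_diagonal,
      trace_diagonal]
    simp [sq]
  have hre : ((ρ * ρ).trace).re = ∑ i, hH.eigenvalues i ^ 2 := by
    rw [hsq]
    rw [show ∑ i, ((hH.eigenvalues i : ℂ)) ^ 2 = ((∑ i, hH.eigenvalues i ^ 2 : ℝ) : ℂ) by push_cast; ring]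
    exact Complex.ofReal_re _
  rw [hre, ← hsum1]
  refine Finset.sum_le_sum fun i _ => ?_
  have h0 := hρ.eigenvalues_nonneg i
  have hle : hH.eigenvalues i ≤ 1 := by
    rw [← hsum1]
    exact Finset.single_le_sum (fun j _ => hρ.eigenvalues_nonneg j) (mem_univ i)
  nlinarith

lemma norm_sub_proj_le {n : ℕ} {ρ Q : Matrix (Fin n) (Fin n) ℂ}
    (hρ : ρ.PosSemidef) (htr : ρ.trace = 1) (hQh : Qᴴ = Q) (hQi : Q * Q = Q)
    (hQt : Q.trace = 1) :
    ‖ρ - Q‖ ≤ Real.sqrt (2 * (1 - ((ρ * Q).trace).re)) := by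
  have hsq : ((ρ * ρ).trace).re ≤ 1 := tr_sq_le_one hρ htr
  have hexp : ((ρ - Q) * (ρ - Q)ᴴ).trace = (ρ * ρ).trace - 2 * (ρ * Q).trace + 1 := by
    rw [conjTranspose_sub, hρ.1, hQh, sub_mul, mul_sub, mul_sub, trace_sub, trace_sub,
      trace_sub, trace_mul_comm Q ρ, hQi, hQt]
    ring
  have hbound : (((ρ - Q) * (ρ - Q)ᴴ).trace).re ≤ 2 * (1 - ((ρ * Q).trace).re) := by
    have h2 : (((ρ - Q) * (ρ - Q)ᴴ).trace).re
        = ((ρ * ρ).trace).re - (2 * (ρ * Q).trace).re + (1 : ℂ).re := by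
      rw [hexp]; simp only [Complex.sub_re, Complex.add_re]
    have h3 : (2 * (ρ * Q).trace).re = 2 * ((ρ * Q).trace).re := by
      simp [Complex.mul_re]
    rw [h2, h3, Complex.one_re]
    linarith
  have hsum : ∑ a, ∑ b, Complex.normSq ((ρ - Q) a b) = (((ρ - Q) * (ρ - Q)ᴴ).trace).re := by
    have h : ((ρ - Q) * (ρ - Q)ᴴ).trace
        = ((∑ a, ∑ b, Complex.normSq ((ρ - Q) a b) : ℝ) : ℂ) := by
      push_cast
      simp only [Matrix.trace, Matrix.diag, Matrix.mul_apply, Matrix.conjTranspose_apply]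
      refine Finset.sum_congr rfl fun a _ => Finset.sum_congr rfl fun b _ => ?_
      rw [Complex.star_def, Complex.mul_conj]
    rw [h, Complex.ofReal_re]
  rw [Matrix.norm_le_iff (Real.sqrt_nonneg _)]
  intro a b
  have h1 : Complex.normSq ((ρ - Q) a b) ≤ 2 * (1 - ((ρ * Q).trace).re) := by
    calc Complex.normSq ((ρ - Q) a b)
        ≤ ∑ b', Complex.normSq ((ρ - Q) a b') :=
          Finset.single_le_sum (fun j _ => Complex.normSq_nonneg _) (mem_univ b)
      _ ≤ ∑ a', ∑ b', Complex.normSq ((ρ - Q) a' b') :=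
          Finset.single_le_sum
            (fun i _ => Finset.sum_nonneg fun j _ => Complex.normSq_nonneg _) (mem_univ a)
      _ ≤ _ := by rw [hsum]; exact hbound
  rw [show ‖(ρ - Q) a b‖ = Real.sqrt (Complex.normSq ((ρ - Q) a b)) by
    rw [Complex.norm_def]]
  exact Real.sqrt_le_sqrt h1

/-- (Closed-loop essential contribution.) Let `L = Σ_k λ_k Π_k` be the
(nondegenerate) QND measurement operator with distinct eigenvalues and rank-one orthogonal
spectral projections resolving the identity, `H` Hermitian with connected Laplacian graph
`Δ_{k,k'} = tr(Π_k D_H(Π_{k'}))`, and let `α_s` (`s ≠ ℓ`) solve `Δ α_s = −β_s` with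
`α_{s,ℓ} = 0`, `α_{s,k} > 0`, where `β_{s,k} > 0` for `k ≠ ℓ` and
`β_{s,ℓ} = −Σ_{k≠ℓ} β_{s,k}`. Then there exist `ε_f > 0` and `p̄ ∈ (1/2, 1)` such that for
every density matrix `ρ` with `max_{j≠ℓ} tr(ρ Π_j) ≥ p̄` one has
`f_α(ρ) ≤ −ε_f · V_α(ρ)`. -/
theorem stmt14 {n d : ℕ}
    (Proj : Fin d → Matrix (Fin n) (Fin n) ℂ)
    (hherm : ∀ k, (Proj k)ᴴ = Proj k)
    (hidem : ∀ k, Proj k * Proj k = Proj k)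
    (horth : ∀ k k', k ≠ k' → Proj k * Proj k' = 0)
    (hres : ∑ k, Proj k = 1)
    (hrank1 : ∀ k, (Proj k).trace = 1)
    (lam : Fin d → ℝ) (hdist : Function.Injective lam)
    (L : Matrix (Fin n) (Fin n) ℂ) (hL : L = ∑ k, (lam k : ℂ) • Proj k)
    (H : Matrix (Fin n) (Fin n) ℂ) (hH : Hᴴ = H)
    (Δ : Matrix (Fin d) (Fin d) ℝ)
    (hΔ : ∀ k k', (Δ k k' : ℂ) = (Proj k * Dsup H (Proj k')).trace)
    (hconn : (SimpleGraph.fromRel (fun k k' => 0 < Δ k k')).Connected)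
    (ℓ : Fin d)
    (β α : {s : Fin d // s ≠ ℓ} → Fin d → ℝ)
    (hβpos : ∀ s, ∀ k, k ≠ ℓ → 0 < β s k)
    (hβℓ : ∀ s, β s ℓ = -∑ k ∈ Finset.univ.erase ℓ, β s k)
    (hmulvec : ∀ s, Δ.mulVec (α s) = -(β s))
    (hαℓ : ∀ s, α s ℓ = 0)
    (hαpos : ∀ s, ∀ k, k ≠ ℓ → 0 < α s k) :
    ∃ εf > (0 : ℝ), ∃ pbar ∈ Set.Ioo (1 / 2 : ℝ) 1,
      ∀ ρ : Matrix (Fin n) (Fin n) ℂ, ρ.PosSemidef → ρ.trace = 1 →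
        (∃ j, j ≠ ℓ ∧ pbar ≤ ((ρ * Proj j).trace).re) →
        (∑ s : {s : Fin d // s ≠ ℓ},
            (∑ k, α s k * ((Proj k * Dsup H ρ).trace).re)
              / Real.sqrt (∑ k, α s k * ((ρ * Proj k).trace).re))
          ≤ -εf * ∑ s : {s : Fin d // s ≠ ℓ},
              Real.sqrt (∑ k, α s k * ((ρ * Proj k).trace).re) := by
  classical
  -- basic facts
  have hαnonneg : ∀ s k, 0 ≤ α s k := by
    intro s k
    by_cases hk : k = ℓ
    · simp [hk, hαℓ]
    · exact (hαpos s k hk).le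
  have hPnonneg : ∀ (ρ : Matrix (Fin n) (Fin n) ℂ), ρ.PosSemidef →
      ∀ k, 0 ≤ ((ρ * Proj k).trace).re := by
    intro ρ hρ k
    have h1 : (ρ * Proj k).trace = ((Proj k)ᴴ * ρ * Proj k).trace := by
      conv_lhs => rw [← hidem k, ← mul_assoc]
      rw [trace_mul_cycle, hherm]
    rw [h1]
    exact trace_re_nonneg' (hρ.conjTranspose_mul_mul_same (Proj k))
  have hsym : ∀ a b, Δ a b = Δ b a := by
    intro a b
    have := hΔ a b
    rw [Dsup_trace_symm hH (Proj b) (Proj a), ← hΔ b a] at this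
    exact_mod_cast this
  have hΔre : ∀ k k', ((Proj k * Dsup H (Proj k')).trace).re = Δ k k' := by
    intro k k'
    rw [← hΔ]
    exact Complex.ofReal_re _
  have halphaΔ : ∀ s (j : Fin d), ∑ k, α s k * Δ k j = -(β s j) := by
    intro s j
    have h := congrFun (hmulvec s) j
    have h2 : ∑ k, Δ j k * α s k = -(β s j) := by
      simpa [Matrix.mulVec, dotProduct] using h
    rw [← h2]
    exact Finset.sum_congr rfl fun k _ => by rw [hsym k j, mul_comm]
  have hPproj : ∀ (j k : Fin d), ((Proj j * Proj k).trace).re = if k = j then 1 else 0 := by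
    intro j k
    by_cases hk : k = j
    · simp [hk, hidem, hrank1]
    · rw [horth j k (fun h => hk h.symm)]
      simp [hk]
  have hVproj : ∀ s (j : Fin d), ∑ k, α s k * ((Proj j * Proj k).trace).re = α s j := by
    intro s j
    simp only [hPproj, mul_ite, mul_one, mul_zero]
    simp
  have hNproj : ∀ s (j : Fin d),
      ∑ k, α s k * ((Proj k * Dsup H (Proj j)).trace).re = -(β s j) := by
    intro s j
    simp only [hΔre]
    exact halphaΔ s j
  -- continuity
  have hcontV : ∀ s : {s : Fin d // s ≠ ℓ},
      Continuous fun ρ : Matrix (Fin n) (Fin n) ℂ =>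
        ∑ k, α s k * ((ρ * Proj k).trace).re :=
    fun s => continuous_finset_sum _ fun k _ =>
      continuous_const.mul (Complex.continuous_re.comp
        ((continuous_id.matrix_mul continuous_const).matrix_trace))
  have hDc : Continuous fun ρ : Matrix (Fin n) (Fin n) ℂ => Dsup H ρ := by
    unfold Dsup
    exact ((continuous_const.matrix_mul continuous_id).matrix_mul continuous_const).sub
      (((continuous_const.matrix_mul continuous_id).add
        ((continuous_id.matrix_mul continuous_const).matrix_mul continuous_const) :
          Continuous fun ρ : Matrix (Fin n) (Fin n) ℂ => Hᴴ * H * ρ + ρ * Hᴴ * H).const_smul (1 / 2 : ℂ))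
  have hcontN : ∀ s : {s : Fin d // s ≠ ℓ},
      Continuous fun ρ : Matrix (Fin n) (Fin n) ℂ =>
        ∑ k, α s k * ((Proj k * Dsup H ρ).trace).re :=
    fun s => continuous_finset_sum _ fun k _ =>
      continuous_const.mul (Complex.continuous_re.comp
        ((continuous_const.matrix_mul hDc).matrix_trace))
  -- the local estimate near each Proj j
  have main : ∀ j : Fin d, ∃ ε δ : ℝ, 0 < ε ∧ 0 < δ ∧ (j ≠ ℓ →
      ∀ ρ : Matrix (Fin n) (Fin n) ℂ, ρ.PosSemidef → ρ.trace = 1 →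
        3 / 4 ≤ ((ρ * Proj j).trace).re → dist ρ (Proj j) < δ →
        (∑ s : {s : Fin d // s ≠ ℓ},
            (∑ k, α s k * ((Proj k * Dsup H ρ).trace).re)
              / Real.sqrt (∑ k, α s k * ((ρ * Proj k).trace).re))
          ≤ -ε * ∑ s : {s : Fin d // s ≠ ℓ},
              Real.sqrt (∑ k, α s k * ((ρ * Proj k).trace).re)) := by
    intro j
    by_cases hj : j = ℓ
    · exact ⟨1, 1, one_pos, one_pos, fun h => absurd hj h⟩
    haveI : Nonempty {s : Fin d // s ≠ ℓ} := ⟨⟨j, hj⟩⟩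
    set c : ℝ := ∑ s : {s : Fin d // s ≠ ℓ}, β s j / Real.sqrt (α s j) with hcdef
    set C : ℝ := ∑ s : {s : Fin d // s ≠ ℓ}, Real.sqrt (α s j) with hCdef
    have hc : 0 < c := Finset.sum_pos (fun s _ =>
      div_pos (hβpos s j hj) (Real.sqrt_pos.2 (hαpos s j hj))) univ_nonempty
    have hC : 0 < C := Finset.sum_pos (fun s _ =>
      Real.sqrt_pos.2 (hαpos s j hj)) univ_nonempty
    set ε : ℝ := c / (2 * C) with hεdef
    have hε : 0 < ε := div_pos hc (by linarith)
    set G : Matrix (Fin n) (Fin n) ℂ → ℝ := fun ρ =>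
      ∑ s : {s : Fin d // s ≠ ℓ},
        ((∑ k, α s k * ((Proj k * Dsup H ρ).trace).re)
            / Real.sqrt (max (∑ k, α s k * ((ρ * Proj k).trace).re) (α s j / 2))
          + ε * Real.sqrt (max (∑ k, α s k * ((ρ * Proj k).trace).re) (α s j / 2)))
      with hGdef
    have hmaxpos : ∀ s : {s : Fin d // s ≠ ℓ}, ∀ x : ℝ,
        Real.sqrt (max x (α s j / 2)) ≠ 0 := by
      intro s x
      refine ne_of_gt (Real.sqrt_pos.2 (lt_of_lt_of_le ?_ (le_max_right _ _)))
      have := hαpos s j hj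
      linarith
    have hGc : Continuous G := by
      refine continuous_finset_sum _ fun s _ => Continuous.add ?_ ?_
      · exact (hcontN s).div
          (Real.continuous_sqrt.comp ((hcontV s).max continuous_const))
          (fun ρ => hmaxpos s _)
      · exact continuous_const.mul
          (Real.continuous_sqrt.comp ((hcontV s).max continuous_const))
    have hεC : ε * C = c / 2 := by
      rw [hεdef]
      field_simp
    have hGj : G (Proj j) < 0 := by
      have hval : G (Proj j) = ∑ s : {s : Fin d // s ≠ ℓ},
          (-(β s j) / Real.sqrt (α s j) + ε * Real.sqrt (α s j)) := by
        rw [hGdef]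
        refine Finset.sum_congr rfl fun s _ => ?_
        rw [hVproj s j, hNproj s j,
          max_eq_left (by have := hαpos s j hj; linarith)]
      rw [hval, Finset.sum_add_distrib, ← Finset.mul_sum, ← hCdef, hεC]
      have : ∑ s : {s : Fin d // s ≠ ℓ}, -(β s j) / Real.sqrt (α s j) = -c := by
        rw [hcdef, ← Finset.sum_neg_distrib]
        exact Finset.sum_congr rfl fun s _ => by rw [neg_div]
      rw [this]
      linarith
    obtain ⟨δ, hδpos, hball⟩ :=
      Metric.isOpen_iff.mp (isOpen_Iio.preimage hGc) (Proj j) hGj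
    refine ⟨ε, δ, hε, hδpos, fun _ ρ hρ htrρ hp34 hdistρ => ?_⟩
    have hGρ : G ρ < 0 := hball (Metric.mem_ball.2 hdistρ)
    have hmax : ∀ s : {s : Fin d // s ≠ ℓ},
        max (∑ k, α s k * ((ρ * Proj k).trace).re) (α s j / 2)
          = ∑ k, α s k * ((ρ * Proj k).trace).re := by
      intro s
      apply max_eq_left
      have h1 : α s j * ((ρ * Proj j).trace).re ≤ ∑ k, α s k * ((ρ * Proj k).trace).re :=
        Finset.single_le_sum
          (fun k _ => mul_nonneg (hαnonneg s k) (hPnonneg ρ hρ k)) (mem_univ j)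
      have h2 := hαpos s j hj
      nlinarith
    rw [hGdef] at hGρ
    simp only [hmax] at hGρ
    rw [Finset.sum_add_distrib, ← Finset.mul_sum] at hGρ
    linarith
  choose eps del hepspos hdelpos hloc using main
  haveI : Nonempty (Fin d) := ⟨ℓ⟩
  set εf : ℝ := Finset.univ.inf' Finset.univ_nonempty eps with hεfdef
  set pbar : ℝ := max (3 / 4)
    (Finset.univ.sup' Finset.univ_nonempty (fun j => 1 - (del j) ^ 2 / 4)) with hpbardef
  have hεfpos : 0 < εf := by
    rw [hεfdef]
    rw [Finset.lt_inf'_iff]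
    exact fun b _ => hepspos b
  refine ⟨εf, hεfpos, pbar, ⟨lt_of_lt_of_le (by norm_num) (le_max_left _ _),
    max_lt (by norm_num) ((Finset.sup'_lt_iff _).2 fun j _ => by nlinarith [hdelpos j])⟩,
    ?_⟩
  rintro ρ hρ htrρ ⟨j, hjℓ, hpj⟩
  have h34 : (3 / 4 : ℝ) ≤ ((ρ * Proj j).trace).re :=
    le_trans (le_max_left _ _) hpj
  have hup : 1 - (del j) ^ 2 / 4 ≤ ((ρ * Proj j).trace).re :=
    le_trans (le_trans (Finset.le_sup' (fun j => 1 - (del j) ^ 2 / 4) (mem_univ j)) (le_max_right _ _)) hpj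
  have hdistρ : dist ρ (Proj j) < del j := by
    have hb : ‖ρ - Proj j‖ ≤ Real.sqrt (2 * (1 - ((ρ * Proj j).trace).re)) :=
      norm_sub_proj_le hρ htrρ (hherm j) (hidem j) (hrank1 j)
    have h2 : Real.sqrt (2 * (1 - ((ρ * Proj j).trace).re))
        ≤ Real.sqrt ((del j) ^ 2 / 2) := Real.sqrt_le_sqrt (by nlinarith)
    have h3 : Real.sqrt ((del j) ^ 2 / 2) < del j := by
      have h4 : Real.sqrt ((del j) ^ 2 / 2) < Real.sqrt ((del j) ^ 2) :=
        Real.sqrt_lt_sqrt (by positivity) (by nlinarith [hdelpos j])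
      rwa [Real.sqrt_sq (hdelpos j).le] at h4
    rw [dist_eq_norm]
    linarith
  have hres := hloc j hjℓ ρ hρ htrρ h34 hdistρ
  have hVnn : 0 ≤ ∑ s : {s : Fin d // s ≠ ℓ},
      Real.sqrt (∑ k, α s k * ((ρ * Proj k).trace).re) :=
    Finset.sum_nonneg fun s _ => Real.sqrt_nonneg _
  have hεle : εf ≤ eps j := Finset.inf'_le _ (mem_univ j)
  calc (∑ s : {s : Fin d // s ≠ ℓ},
        (∑ k, α s k * ((Proj k * Dsup H ρ).trace).re)
          / Real.sqrt (∑ k, α s k * ((ρ * Proj k).trace).re))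
      ≤ -(eps j) * ∑ s : {s : Fin d // s ≠ ℓ},
          Real.sqrt (∑ k, α s k * ((ρ * Proj k).trace).re) := hres
    _ ≤ -εf * ∑ s : {s : Fin d // s ≠ ℓ},
          Real.sqrt (∑ k, α s k * ((ρ * Proj k).trace).re) := by nlinarith
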